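/- Let X be a compact metrizable space, m ∈ M(M(X)), and let μ ∈ M(X) be the barycenter of m. Then for every Borel subset D of X, the function ν ↦ ν(D) on M(X) is Borel measurable, and μ(D) = ∫_{M(X)} ν(D) dm(ν). -/

import Mathlib

open MeasureTheory Filter Topology BoundedContinuousFunction
open scoped NNReal ENNReal

/-- For a bounded continuous `ℝ≥0`-valued function `f`, the map `ν ↦ ∫⁻ f dν` is continuous
on probability measures with the weak topology. -/
lemma continuous_lintegral_bcf {X : Type*} [TopologicalSpace X] [MeasurableSpace X]
    [OpensMeasurableSpace X] (f : X →ᵇ ℝ≥0) :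
    Continuous (fun ν : ProbabilityMeasure X => ∫⁻ x, f x ∂(ν : Measure X)) := by
  rw [continuous_iff_continuousAt]
  intro ν
  exact (ProbabilityMeasure.tendsto_iff_forall_lintegral_tendsto.mp tendsto_id) f

lemma lintegral_bcf_le {X : Type*} [TopologicalSpace X] [MeasurableSpace X]
    [OpensMeasurableSpace X] (f : X →ᵇ ℝ≥0) (ν : ProbabilityMeasure X) :
    ∫⁻ x, f x ∂(ν : Measure X) ≤ (nndist 0 f : ℝ≥0∞) := by
  calc ∫⁻ x, f x ∂(ν : Measure X) ≤ ∫⁻ _, ((nndist 0 f : ℝ≥0) : ℝ≥0∞) ∂(ν : Measure X) :=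
        lintegral_mono fun x => ENNReal.coe_le_coe.mpr (f.apply_le_nndist_zero x)
    _ = (nndist 0 f : ℝ≥0∞) := by simp

theorem barycenter_eval_borel_set {X : Type*} [TopologicalSpace X] [CompactSpace X]
    [TopologicalSpace.MetrizableSpace X] [MeasurableSpace X] [BorelSpace X]
    [MeasurableSpace (ProbabilityMeasure X)] [BorelSpace (ProbabilityMeasure X)]
    (m : ProbabilityMeasure (ProbabilityMeasure X)) (μ : ProbabilityMeasure X)
    (hbary : ∀ f : C(X, ℝ), ∫ x, f x ∂(μ : Measure X) =
      ∫ ν, (∫ x, f x ∂((ν : Measure X))) ∂(m : Measure (ProbabilityMeasure X))) :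
    ∀ D : Set X, MeasurableSet D →
      Measurable (fun ν : ProbabilityMeasure X => (ν : Measure X) D) ∧
      (μ : Measure X) D =
        ∫⁻ ν, (ν : Measure X) D ∂(m : Measure (ProbabilityMeasure X)) := by
  -- Step 1: the lintegral version of the barycenter property, for `ℝ≥0`-valued bcf's.
  have key : ∀ f : X →ᵇ ℝ≥0,
      ∫⁻ x, f x ∂(μ : Measure X) =
        ∫⁻ ν, (∫⁻ x, f x ∂(ν : Measure X)) ∂(m : Measure (ProbabilityMeasure X)) := by
    intro f
    set L : ProbabilityMeasure X → ℝ≥0∞ := fun ν => ∫⁻ x, f x ∂(ν : Measure X) with hL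
    have hLmeas : Measurable L := (continuous_lintegral_bcf f).measurable
    have hLlt : ∀ ν, L ν ≠ ∞ := fun ν => ((lintegral_bcf_le f ν).trans_lt ENNReal.coe_lt_top).ne
    -- integrability of `x ↦ (f x : ℝ)` against any probability measure
    have hint : ∀ ν : Measure X, IsProbabilityMeasure ν →
        Integrable (fun x => (f x : ℝ)) ν := fun ν hν => f.integrable_of_nnreal ν
    have hcoe : ∀ (ν : Measure X), IsProbabilityMeasure ν →
        ∫⁻ x, f x ∂ν = ENNReal.ofReal (∫ x, (f x : ℝ) ∂ν) := fun ν hν =>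
      lintegral_coe_eq_integral f (hint ν hν)
    -- the continuous function to feed to `hbary`
    set fc : C(X, ℝ) := ⟨fun x => (f x : ℝ), NNReal.continuous_coe.comp f.continuous⟩ with hfc
    have hGL : ∀ ν : ProbabilityMeasure X, ∫ x, (f x : ℝ) ∂(ν : Measure X) = (L ν).toReal := by
      intro ν
      simp only [hL]
      rw [hcoe _ inferInstance, ENNReal.toReal_ofReal]
      exact integral_nonneg fun x => (f x).coe_nonneg
    -- integrability of the outer function
    have hGmeas : Measurable fun ν : ProbabilityMeasure X =>
        ∫ x, (f x : ℝ) ∂(ν : Measure X) := by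
      simp only [hGL]
      exact hLmeas.ennreal_toReal
    have hGint : Integrable (fun ν : ProbabilityMeasure X => ∫ x, (f x : ℝ) ∂(ν : Measure X))
        (m : Measure (ProbabilityMeasure X)) := by
      refine (integrable_const ((nndist 0 f : ℝ≥0) : ℝ)).mono' hGmeas.aestronglyMeasurable ?_
      refine Filter.Eventually.of_forall fun ν => ?_
      rw [hGL, Real.norm_eq_abs, abs_of_nonneg ENNReal.toReal_nonneg]
      calc (L ν).toReal ≤ ((nndist 0 f : ℝ≥0) : ℝ≥0∞).toReal :=
            ENNReal.toReal_mono ENNReal.coe_ne_top (lintegral_bcf_le f ν)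
        _ = ((nndist 0 f : ℝ≥0) : ℝ) := ENNReal.coe_toReal _
    calc ∫⁻ x, f x ∂(μ : Measure X)
        = ENNReal.ofReal (∫ x, (f x : ℝ) ∂(μ : Measure X)) := hcoe _ inferInstance
      _ = ENNReal.ofReal (∫ ν, (∫ x, (f x : ℝ) ∂(ν : Measure X))
            ∂(m : Measure (ProbabilityMeasure X))) := congrArg ENNReal.ofReal (hbary fc)
      _ = ∫⁻ ν, ENNReal.ofReal (∫ x, (f x : ℝ) ∂(ν : Measure X))
            ∂(m : Measure (ProbabilityMeasure X)) := by
          refine ofReal_integral_eq_lintegral_ofReal hGint ?_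
          exact Filter.Eventually.of_forall fun ν =>
            integral_nonneg fun x => (f x).coe_nonneg
      _ = ∫⁻ ν, (∫⁻ x, f x ∂(ν : Measure X)) ∂(m : Measure (ProbabilityMeasure X)) := by
          refine lintegral_congr fun ν => ?_
          rw [← hcoe _ inferInstance]
  -- Step 2: π-λ induction over the Borel σ-algebra, generated by closed sets.
  have h_eq : (‹MeasurableSpace X› : MeasurableSpace X) =
      MeasurableSpace.generateFrom {s : Set X | IsClosed s} := by
    rw [BorelSpace.measurable_eq (α := X), borel_eq_generateFrom_isClosed]
  intro D hD
  refine MeasurableSpace.induction_on_inter (C := fun D _ =>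
      Measurable (fun ν : ProbabilityMeasure X => (ν : Measure X) D) ∧
      (μ : Measure X) D =
        ∫⁻ ν, (ν : Measure X) D ∂(m : Measure (ProbabilityMeasure X)))
      h_eq isPiSystem_isClosed ?_ ?_ ?_ ?_ D hD
  · constructor
    · simpa using (measurable_const : Measurable fun _ : ProbabilityMeasure X => (0 : ℝ≥0∞))
    · simp
  · intro F hF
    replace hF : IsClosed F := hF
    set g : ℕ → ProbabilityMeasure X → ℝ≥0∞ :=
      fun n ν => ∫⁻ x, hF.apprSeq n x ∂(ν : Measure X) with hg
    have hgmeas : ∀ n, Measurable (g n) := fun n =>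
      (continuous_lintegral_bcf (hF.apprSeq n)).measurable
    have hgtendsto : ∀ ν : ProbabilityMeasure X,
        Tendsto (fun n => g n ν) atTop (𝓝 ((ν : Measure X) F)) := fun ν =>
      HasOuterApproxClosed.tendsto_lintegral_apprSeq hF (ν : Measure X)
    have hgle : ∀ n ν, g n ν ≤ 1 := by
      intro n ν
      calc g n ν ≤ ∫⁻ _, 1 ∂(ν : Measure X) := by
            refine lintegral_mono fun x => ?_
            simpa using ENNReal.coe_le_coe.mpr
              (HasOuterApproxClosed.apprSeq_apply_le_one hF n x)
        _ = 1 := by simp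
    have hmeas : Measurable (fun ν : ProbabilityMeasure X => (ν : Measure X) F) :=
      measurable_of_tendsto_metrizable hgmeas (tendsto_pi_nhds.mpr hgtendsto)
    refine ⟨hmeas, ?_⟩
    have h1 : Tendsto (fun n => ∫⁻ x, hF.apprSeq n x ∂(μ : Measure X)) atTop
        (𝓝 ((μ : Measure X) F)) :=
      HasOuterApproxClosed.tendsto_lintegral_apprSeq hF (μ : Measure X)
    have h1' : Tendsto (fun n => ∫⁻ ν, g n ν ∂(m : Measure (ProbabilityMeasure X))) atTop
        (𝓝 ((μ : Measure X) F)) := by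
      refine h1.congr fun n => ?_
      exact key (hF.apprSeq n)
    have h2 : Tendsto (fun n => ∫⁻ ν, g n ν ∂(m : Measure (ProbabilityMeasure X))) atTop
        (𝓝 (∫⁻ ν, (ν : Measure X) F ∂(m : Measure (ProbabilityMeasure X)))) := by
      refine tendsto_lintegral_of_dominated_convergence (fun _ => 1) hgmeas
        (fun n => Filter.Eventually.of_forall fun ν => hgle n ν) (by simp) ?_
      exact Filter.Eventually.of_forall hgtendsto
    exact tendsto_nhds_unique h1' h2
  · intro t htm iht
    obtain ⟨hmeas, heq⟩ := iht
    have hcompl : ∀ ν : ProbabilityMeasure X, (ν : Measure X) tᶜ = 1 - (ν : Measure X) t := by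
      intro ν
      rw [measure_compl htm (measure_ne_top _ _)]
      simp
    have hle1 : ∀ ν : ProbabilityMeasure X, (ν : Measure X) t ≤ 1 := fun ν => prob_le_one
    constructor
    · simp only [hcompl]
      exact measurable_const.sub hmeas
    · have hfin : ∫⁻ ν, (ν : Measure X) t ∂(m : Measure (ProbabilityMeasure X)) ≠ ∞ := by
        refine ne_of_lt (lt_of_le_of_lt ?_ (by norm_num : (1 : ℝ≥0∞) < ∞))
        calc ∫⁻ ν, (ν : Measure X) t ∂(m : Measure (ProbabilityMeasure X))
            ≤ ∫⁻ _, 1 ∂(m : Measure (ProbabilityMeasure X)) := lintegral_mono hle1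
          _ = 1 := by simp
      have : ∫⁻ ν, (ν : Measure X) tᶜ ∂(m : Measure (ProbabilityMeasure X))
          = ∫⁻ ν, (1 - (ν : Measure X) t) ∂(m : Measure (ProbabilityMeasure X)) :=
        lintegral_congr fun ν => hcompl ν
      rw [this, lintegral_sub hmeas hfin (Filter.Eventually.of_forall hle1)]
      rw [hcompl μ, ← heq]
      simp
  · intro f hdisj hfm ihf
    have hunion : ∀ ν : ProbabilityMeasure X,
        (ν : Measure X) (⋃ i, f i) = ∑' i, (ν : Measure X) (f i) := fun ν =>
      measure_iUnion hdisj hfm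
    constructor
    · simp only [hunion]
      exact Measurable.ennreal_tsum fun i => (ihf i).1
    · calc (μ : Measure X) (⋃ i, f i) = ∑' i, (μ : Measure X) (f i) := hunion μ
        _ = ∑' i, ∫⁻ ν, (ν : Measure X) (f i) ∂(m : Measure (ProbabilityMeasure X)) := by
            exact tsum_congr fun i => (ihf i).2
        _ = ∫⁻ ν, ∑' i, (ν : Measure X) (f i) ∂(m : Measure (ProbabilityMeasure X)) :=
            (lintegral_tsum fun i => (ihf i).1.aemeasurable).symm
        _ = ∫⁻ ν, (ν : Measure X) (⋃ i, f i) ∂(m : Measure (ProbabilityMeasure X)) :=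
            lintegral_congr fun ν => (hunion ν).symm
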